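/- Let κ be an infinite cardinal. Then 𝒫(κ) contains a chain 𝒜 of cardinality κ⁺ such that |A − B| = κ for any two members A and B of 𝒜 with B ⊊ A. -/

import Mathlib

open Cardinal Set

universe u

namespace ExistsChainAux

variable {Λ : Type u} [LinearOrder Λ]

/-- Nodes of the binary tree `2^{<Λ}`. -/
def D (Λ : Type u) [LinearOrder Λ] : Type u := Σ x : Λ, (Iio x → Bool)

/-- Node `p` lies lexicographically below the branch `f` (with the convention that
a node sits strictly between its `false`-extensions and its `true`-extensions). -/
def NB (p : D Λ) (f : Λ → Bool) : Prop :=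
  (∃ j : Iio p.1, p.2 j = false ∧ f j.1 = true ∧ ∀ k : Iio p.1, k.1 < j.1 → p.2 k = f k.1)
  ∨ ((∀ j : Iio p.1, p.2 j = f j.1) ∧ f p.1 = true)

/-- Lower set determined by a branch. -/
def I (f : Λ → Bool) : Set (D Λ) := {p | NB p f}

theorem key {f g : Λ → Bool} {i : Λ} (hlow : ∀ k < i, f k = g k)
    (hf : f i = false) (hg : g i = true) :
    I f ⊆ I g ∧ (⟨i, fun k => f k.1⟩ : D Λ) ∈ I g \ I f := by
  constructor
  · rintro ⟨x, s⟩ (⟨j, hsj, hfj, hmin⟩ | ⟨hall, hfx⟩)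
    · rcases lt_trichotomy j.1 i with hji | hji | hji
      · refine Or.inl ⟨j, hsj, ?_, ?_⟩
        · rw [← hlow j.1 hji]; exact hfj
        · intro k hk; rw [hmin k hk, hlow k.1 (hk.trans hji)]
      · exact absurd hfj (by rw [hji, hf]; simp)
      · have hix : i < x := hji.trans j.2
        refine Or.inl ⟨⟨i, hix⟩, ?_, hg, ?_⟩
        · rw [hmin ⟨i, hix⟩ hji, hf]
        · intro k hk
          rw [hmin k (hk.trans hji), hlow k.1 hk]
    · rcases lt_trichotomy x i with hxi | hxi | hxi
      · refine Or.inr ⟨?_, ?_⟩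
        · intro j; rw [hall j, hlow j.1 (j.2.trans hxi)]
        · rw [← hlow x hxi]; exact hfx
      · have hx' : f x = true := hfx
        rw [hxi, hf] at hx'
        exact Bool.noConfusion hx'
      · refine Or.inl ⟨⟨i, hxi⟩, ?_, hg, ?_⟩
        · rw [hall ⟨i, hxi⟩, hf]
        · intro k hk; rw [hall k, hlow k.1 hk]
  · constructor
    · exact Or.inr ⟨fun j => hlow j.1 j.2, hg⟩
    · rintro (⟨j, hsj, hfj, -⟩ | ⟨-, hfx⟩)
      · have hsj' : f j.1 = false := hsj
        rw [hsj'] at hfj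
        exact Bool.false_ne_true hfj
      · rw [hf] at hfx; exact Bool.false_ne_true hfx

theorem comparable [WellFoundedLT Λ] {f g : Λ → Bool} (h : f ≠ g) :
    (I f ⊆ I g ∧ (I g \ I f).Nonempty) ∨ (I g ⊆ I f ∧ (I f \ I g).Nonempty) := by
  have hT : {j : Λ | f j ≠ g j}.Nonempty := by
    obtain ⟨a, ha⟩ := Function.ne_iff.mp h
    exact ⟨a, ha⟩
  obtain ⟨i, hiT, hmin'⟩ :=
    (IsWellFounded.wf : WellFounded ((· < ·) : Λ → Λ → Prop)).has_min _ hT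
  have hiT : f i ≠ g i := hiT
  have hlow : ∀ k < i, f k = g k := by
    intro k hk
    by_contra hc
    exact hmin' k hc hk
  rcases Bool.eq_false_or_eq_true (f i) with hf | hf
  · have hg : g i = false := by
      cases hgi : g i
      · rfl
      · exact absurd (hf.trans hgi.symm) hiT
    have hlow' : ∀ k < i, g k = f k := fun k hk => (hlow k hk).symm
    have := key hlow' hg hf
    exact Or.inr ⟨this.1, ⟨_, this.2⟩⟩
  · have hg : g i = true := by
      cases hgi : g i
      · exact absurd (hf.trans hgi.symm) hiT
      · rfl
    have := key hlow hf hg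
    exact Or.inl ⟨this.1, ⟨_, this.2⟩⟩

end ExistsChainAux

open ExistsChainAux

/-- Let κ be an infinite cardinal. Then 𝒫(κ) contains a chain 𝒜 of
cardinality κ⁺ such that |A − B| = κ for any two members A and B of 𝒜 with B ⊊ A. -/
theorem exists_chain_card_succ {X : Type u} (κ : Cardinal.{u})
    (hX : Cardinal.mk X = κ) (hκ : Cardinal.aleph0 ≤ κ) :
    ∃ 𝒜 : Set (Set X), IsChain (· ⊆ ·) 𝒜 ∧ Cardinal.mk 𝒜 = Order.succ κ ∧
      ∀ A ∈ 𝒜, ∀ B ∈ 𝒜, B ⊂ A → Cardinal.mk (A \ B : Set X) = κ := by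
  classical
  -- the least cardinal `lam` with `κ < 2 ^ lam`
  set S : Set Cardinal.{u} := {μ | κ < 2 ^ μ} with hS
  have hSne : S.Nonempty := ⟨κ, by simpa [hS] using Cardinal.cantor κ⟩
  set lam : Cardinal.{u} := sInf S with hlamdef
  have hlam : κ < 2 ^ lam := csInf_mem hSne
  have hmin : ∀ μ < lam, 2 ^ μ ≤ κ := by
    intro μ hμ
    by_contra hc
    exact absurd (csInf_le' (show μ ∈ S from not_le.mp hc)) (not_le.mpr hμ)
  have hlamκ : lam ≤ κ := csInf_le' (show κ ∈ S from Cardinal.cantor κ)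
  have hlam0 : Cardinal.aleph0 ≤ lam := by
    by_contra hc
    push_neg at hc
    have h2 : (2 : Cardinal) ^ lam < Cardinal.aleph0 :=
      Cardinal.power_lt_aleph0 (by simpa using Cardinal.nat_lt_aleph0 2) hc
    exact absurd (h2.trans_le hκ) (not_lt.mpr hlam.le)
  -- the tree `2^{<lam}` over the well-ordered type `Λ`
  set Λ : Type u := lam.ord.ToType with hΛ
  have hmkΛ : Cardinal.mk Λ = lam := by rw [hΛ, Cardinal.mk_toType, Cardinal.card_ord]
  -- `D Λ` has cardinality at most `κ`
  have hD : Cardinal.mk (D Λ) ≤ κ := by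
    have : Cardinal.mk (D Λ) = Cardinal.sum fun x : Λ => Cardinal.mk (Iio x → Bool) :=
      Cardinal.mk_sigma _
    rw [this]
    have hb : ∀ x : Λ, Cardinal.mk (Iio x → Bool) ≤ κ := by
      intro x
      have h1 : Cardinal.mk (Iio x → Bool) = 2 ^ Cardinal.mk (Iio x) := by
        rw [Cardinal.mk_arrow]
        simp
      rw [h1]
      exact hmin _ (Cardinal.mk_Iio_ord_toType x)
    calc Cardinal.sum (fun x : Λ => Cardinal.mk (Iio x → Bool))
        ≤ Cardinal.sum (fun _ : Λ => κ) := Cardinal.sum_le_sum _ _ hb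
      _ = Cardinal.mk Λ * κ := Cardinal.sum_const' _ _
      _ ≤ κ * κ := by
          exact mul_le_mul_left (by rw [hmkΛ]; exact hlamκ) κ
      _ = κ := Cardinal.mul_eq_self hκ
  have hDne : Nonempty (D Λ) := by
    have : Nonempty Λ := by
      rw [← Cardinal.mk_ne_zero_iff, hmkΛ]
      exact ne_of_gt (lt_of_lt_of_le Cardinal.aleph0_pos hlam0)
    obtain ⟨x⟩ := this
    exact ⟨⟨x, fun _ => false⟩⟩
  have hXne : Nonempty X := by
    rw [← Cardinal.mk_ne_zero_iff, hX]
    exact ne_of_gt (lt_of_lt_of_le Cardinal.aleph0_pos hκ)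
  obtain ⟨x₀⟩ := hXne
  -- an equivalence `D Λ × X ≃ X`
  have hmkDX : Cardinal.mk (D Λ × X) = Cardinal.mk X := by
    rw [Cardinal.mk_prod, Cardinal.lift_id, Cardinal.lift_id, hX]
    exact Cardinal.mul_eq_right hκ hD (Cardinal.mk_ne_zero _)
  obtain ⟨φ⟩ := Cardinal.eq.mp hmkDX
  -- the family of `κ⁺` branches
  have hbranch : Order.succ κ ≤ Cardinal.mk (Λ → Bool) := by
    have : Cardinal.mk (Λ → Bool) = 2 ^ lam := by
      rw [Cardinal.mk_arrow]
      simp [hmkΛ]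
    rw [this, Order.succ_le_iff]
    exact hlam
  obtain ⟨F, hF⟩ := Cardinal.le_mk_iff_exists_set.mp hbranch
  -- the chain
  set Ψ : (Λ → Bool) → Set X := fun f => φ '' (I f ×ˢ (univ : Set X)) with hΨ
  have hmono : ∀ {f g : Λ → Bool}, I f ⊆ I g → Ψ f ⊆ Ψ g := by
    intro f g h
    exact Set.image_mono (Set.prod_mono h (subset_refl _))
  have hdiff : ∀ {f g : Λ → Bool}, ∀ p ∈ I g \ I f, φ (p, x₀) ∈ Ψ g \ Ψ f := by
    intro f g p hp
    constructor
    · exact ⟨(p, x₀), ⟨hp.1, trivial⟩, rfl⟩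
    · rintro ⟨⟨q, y⟩, ⟨hq, -⟩, hqe⟩
      have : (q, y) = (p, x₀) := φ.injective hqe
      rw [Prod.mk.injEq] at this
      exact hp.2 (this.1 ▸ hq)
  refine ⟨Ψ '' F, ?_, ?_, ?_⟩
  · -- chain
    rintro - ⟨f, -, rfl⟩ - ⟨g, -, rfl⟩ hne
    have hfg : f ≠ g := fun h => hne (by rw [h])
    rcases comparable hfg with ⟨h1, -⟩ | ⟨h1, -⟩
    · exact Or.inl (hmono h1)
    · exact Or.inr (hmono h1)
  · -- cardinality
    rw [← hF]
    apply Cardinal.mk_image_eq_of_injOn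
    intro f hf g hg hΨeq
    by_contra hfg
    rcases comparable hfg with ⟨-, p, hp⟩ | ⟨-, p, hp⟩
    · exact (hΨeq ▸ (hdiff p hp)).2 (hdiff p hp).1
    · have := hdiff p hp
      rw [hΨeq] at this
      exact this.2 this.1
  · -- differences
    rintro - ⟨g, -, rfl⟩ - ⟨f, -, rfl⟩ hsub
    have hfg : f ≠ g := by
      rintro rfl
      exact hsub.2 hsub.1
    have hIfg : I f ⊆ I g ∧ (I g \ I f).Nonempty := by
      rcases comparable hfg with h | ⟨h1, p, hp⟩
      · exact h
      · exact absurd (hmono h1) (fun hc => hsub.2 hc)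
    obtain ⟨hI, p, hp⟩ := hIfg
    have him : Ψ g \ Ψ f = φ '' ((I g \ I f) ×ˢ (univ : Set X)) := by
      rw [hΨ, ← Set.image_diff φ.injective, Set.prod_diff_prod, Set.diff_self,
        Set.prod_empty, Set.empty_union]
    rw [him, Cardinal.mk_image_eq φ.injective, Cardinal.mk_setProd, Cardinal.mk_univ, hX]
    apply Cardinal.mul_eq_right hκ
    · exact (Cardinal.mk_set_le _).trans hD
    · rw [Cardinal.mk_ne_zero_iff]
      exact ⟨⟨p, hp⟩⟩
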